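/- Let f : ℝ^d → ℝ satisfy the SPB growth estimate with parameters R₁, R₂, m, let x ∈ ℝ^d, σ > 0, and let p ≥ 1 be an integer. Define F(u) = σ^{−1}(f(x + σu) − f(x)) u. Then E_{u∼N(0,I)}[‖F(u)‖^p] ≤ ℋ_(p) (‖x‖^{mp} + 1), where ℋ_(p) = 3^{p−1} · max{ 2^{(m−1)p} R₁^p (2p+d)^p , R₂^p (2p+d)^p + 2^{(m−1)p} R₁^p σ^{mp} ((m+2)p + d)^{((m+2)p)/2} }. -/

import Mathlib

open MeasureTheory Filter Set
open scoped InnerProductSpace ENNReal Topology Real NNReal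

/-- The standard Gaussian probability measure `N(0, I)` on `ℝ^d`
(with density `(2π)^{-d/2} e^{-‖u‖²/2}`), realized as the product of `d`
standard one-dimensional Gaussians. -/
noncomputable def stdGaussian (d : ℕ) : Measure (EuclideanSpace ℝ (Fin d)) :=
  Measure.map (MeasurableEquiv.toLp 2 (Fin d → ℝ))
    (Measure.pi fun _ : Fin d => ProbabilityTheory.gaussianReal 0 1)

instance (d : ℕ) : IsProbabilityMeasure (stdGaussian d) :=
  Measure.isProbabilityMeasure_map (MeasurableEquiv.toLp 2 (Fin d → ℝ)).measurable.aemeasurable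

/-- `f` satisfies the SPB growth estimate with parameters `R1, R2, m`:
`|f x - f y| ≤ (2^{m-1} R₁ ‖x‖^m + 2^{m-1} R₁ ‖y-x‖^m + R₂) ‖x-y‖`. -/
def SPBGrowth {d : ℕ} (f : EuclideanSpace ℝ (Fin d) → ℝ) (R1 R2 : ℝ) (m : ℕ) : Prop :=
  ∀ x y : EuclideanSpace ℝ (Fin d),
    |f x - f y| ≤ ((2 : ℝ) ^ ((m : ℤ) - 1) * R1 * ‖x‖ ^ m
      + (2 : ℝ) ^ ((m : ℤ) - 1) * R1 * ‖y - x‖ ^ m + R2) * ‖x - y‖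

/-- The Gaussian smoothing `f_σ(x) = E_{u ∼ N(0,I)}[f (x + σ u)]`. -/
noncomputable def gsmooth {d : ℕ} (σ : ℝ) (f : EuclideanSpace ℝ (Fin d) → ℝ)
    (x : EuclideanSpace ℝ (Fin d)) : ℝ :=
  ∫ u, f (x + σ • u) ∂(stdGaussian d)

/-- The gradient of the Gaussian smoothing:
`∇f_σ(x) = σ⁻¹ E_{u ∼ N(0,I)}[f (x + σ u) u]`. -/
noncomputable def gsGrad {d : ℕ} (σ : ℝ) (f : EuclideanSpace ℝ (Fin d) → ℝ)
    (x : EuclideanSpace ℝ (Fin d)) : EuclideanSpace ℝ (Fin d) :=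
  σ⁻¹ • ∫ u, f (x + σ • u) • u ∂(stdGaussian d)

/-- The constant `ℋ_(p)` of Lemma 4.3. -/
noncomputable def spbH (d m p : ℕ) (R1 R2 σ : ℝ) : ℝ :=
  3 ^ (p - 1) * max ((2 : ℝ) ^ (((m : ℤ) - 1) * p) * R1 ^ p * ((2 * p + d : ℕ) : ℝ) ^ p)
    (R2 ^ p * ((2 * p + d : ℕ) : ℝ) ^ p +
      (2 : ℝ) ^ (((m : ℤ) - 1) * p) * R1 ^ p * σ ^ (m * p) *
        (((m + 2) * p + d : ℕ) : ℝ) ^ ((((m + 2) * p : ℕ) : ℝ) / 2))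

/-- The function `ℳ` of Lemma 4.2. -/
noncomputable def spbM {d : ℕ} (m : ℕ) (R1 R2 σ : ℝ) (x : EuclideanSpace ℝ (Fin d)) : ℝ :=
  ((2 : ℝ) ^ ((m : ℤ) - 1) * R1 * ‖x‖ ^ m + R2) * Real.sqrt d +
    (2 : ℝ) ^ ((m : ℤ) - 1) * R1 * σ ^ m * ((m + 1 + d : ℕ) : ℝ) ^ (((m : ℝ) + 1) / 2)

/-- The constant `𝒜`. -/
noncomputable def spbA (d m : ℕ) (R1 R2 σ : ℝ) : ℝ :=
  (2 : ℝ) ^ (2 * (m : ℤ) - 2) * R1 * σ ^ ((m : ℤ) - 1) *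
      ((m + 1 + d : ℕ) : ℝ) ^ (((m : ℝ) + 1) / 2) + σ⁻¹ * R2 * Real.sqrt d

/-- The constant `ℬ`. -/
noncomputable def spbB (d m : ℕ) (R1 σ : ℝ) : ℝ :=
  (2 : ℝ) ^ (2 * (m : ℤ) - 2) * σ⁻¹ * R1 * Real.sqrt d

/-- The constant `𝒞`. -/
noncomputable def spbC (d m : ℕ) (R1 σ : ℝ) : ℝ :=
  (2 : ℝ) ^ ((m : ℤ) - 1) * σ⁻¹ * R1 * Real.sqrt d

open Finset ProbabilityTheory

lemma aux_pow_le_exp (t : ℝ) (ht : 0 ≤ t) (j : ℕ) : t ^ j ≤ j.factorial * Real.exp t := by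
  have h1 : t ^ j / j.factorial ≤ Real.exp t := by
    calc t ^ j / j.factorial ≤ ∑ i ∈ Finset.range (j+1), t ^ i / i.factorial :=
          Finset.single_le_sum (f := fun i => t ^ i / i.factorial)
            (fun i _ => by positivity) (Finset.self_mem_range_succ j)
      _ ≤ Real.exp t := Real.sum_le_exp_of_nonneg ht _
  have hf : (0:ℝ) < j.factorial := by positivity
  rw [div_le_iff₀ hf] at h1
  linarith [h1]

lemma aux_integrable_pow_gauss (n : ℕ) :
    Integrable (fun x : ℝ => x ^ n * Real.exp (-x ^ 2 / 2)) := by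
  have hcont : Continuous fun x : ℝ => x ^ n * Real.exp (-x ^ 2 / 2) := by continuity
  have hint : Integrable (fun x : ℝ => Real.exp (-(1/4 : ℝ) * x ^ 2)) :=
    integrable_exp_neg_mul_sq (by norm_num)
  refine (hint.const_mul ((1 : ℝ) + 4 ^ n * n.factorial)).mono' hcont.aestronglyMeasurable ?_
  filter_upwards with x
  have hx2 : (0:ℝ) ≤ x ^ 2 := sq_nonneg x
  have h1 : |x| ^ n ≤ 1 + (x ^ 2) ^ n := by
    rcases le_total (|x|) 1 with h | h
    · have : |x| ^ n ≤ 1 := pow_le_one₀ (abs_nonneg x) h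
      nlinarith [pow_nonneg (sq_nonneg x) n]
    · have h2 : |x| ^ n ≤ (x ^ 2) ^ n := by
        apply pow_le_pow_left₀ (abs_nonneg x)
        nlinarith [sq_abs x, abs_nonneg x]
      linarith
  have h2 : (x ^ 2) ^ n ≤ 4 ^ n * n.factorial * Real.exp (x ^ 2 / 4) := by
    have := aux_pow_le_exp (x ^ 2 / 4) (by positivity) n
    have h3 : (x^2)^n = 4 ^ n * (x^2/4)^n := by
      rw [div_pow]
      field_simp
    rw [h3]
    calc (4:ℝ) ^ n * (x^2/4)^n ≤ 4 ^ n * (n.factorial * Real.exp (x^2/4)) := by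
          apply mul_le_mul_of_nonneg_left this (by positivity)
      _ = 4 ^ n * n.factorial * Real.exp (x^2/4) := by ring
  have hexp : Real.exp (-x^2/2) * Real.exp (x^2/4) = Real.exp (-(1/4:ℝ) * x^2) := by
    rw [← Real.exp_add]; ring_nf
  have hepos : (0:ℝ) < Real.exp (-x^2/2) := Real.exp_pos _
  have hbound : |x ^ n * Real.exp (-x^2/2)| ≤ (1 + 4^n * n.factorial) * Real.exp (-(1/4:ℝ) * x^2) := by
    rw [abs_mul, abs_of_pos hepos, abs_pow]
    calc |x| ^ n * Real.exp (-x^2/2) ≤ (1 + 4^n * n.factorial * Real.exp (x^2/4)) * Real.exp (-x^2/2) := by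
          apply mul_le_mul_of_nonneg_right _ hepos.le
          linarith
      _ = Real.exp (-x^2/2) + 4^n*n.factorial * (Real.exp (-x^2/2) * Real.exp (x^2/4)) := by ring
      _ = Real.exp (-x^2/2) + 4^n*n.factorial * Real.exp (-(1/4:ℝ)*x^2) := by rw [hexp]
      _ ≤ Real.exp (-(1/4:ℝ)*x^2) + 4^n*n.factorial * Real.exp (-(1/4:ℝ)*x^2) := by
          have : Real.exp (-x^2/2) ≤ Real.exp (-(1/4:ℝ)*x^2) := by
            apply Real.exp_le_exp.mpr; nlinarith
          linarith
      _ = (1 + 4^n * n.factorial) * Real.exp (-(1/4:ℝ)*x^2) := by ring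
  calc ‖x ^ n * Real.exp (-x^2/2)‖ = |x ^ n * Real.exp (-x^2/2)| := Real.norm_eq_abs _
    _ ≤ (1 + 4^n * n.factorial) * Real.exp (-(1/4:ℝ) * x^2) := hbound

lemma aux_tendsto_pow_gauss (n : ℕ) :
    Tendsto (fun x : ℝ => x ^ n * Real.exp (-x ^ 2 / 2)) atTop (nhds 0) := by
  have h := rpow_mul_exp_neg_mul_sq_isLittleO_exp_neg (b := 1/2) (by norm_num) (n : ℝ)
  have heq : (fun x : ℝ => x ^ (n:ℝ) * Real.exp (-(1/2) * x ^ 2))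
      =ᶠ[atTop] (fun x : ℝ => x ^ n * Real.exp (-x ^ 2 / 2)) := by
    filter_upwards [eventually_ge_atTop (0:ℝ)] with x hx
    rw [Real.rpow_natCast]
    ring_nf
  have h2 := (h.congr' heq (EventuallyEq.refl _ _)).isBigO
  apply h2.trans_tendsto
  have : Tendsto (fun x : ℝ => -(1/2) * x) atTop atBot := by
    apply Tendsto.const_mul_atTop_of_neg (by norm_num) tendsto_id
  exact Real.tendsto_exp_atBot.comp this

lemma aux_gauss_moment_rec (k : ℕ) :
    ∫ x : ℝ, x ^ (2*k+2) * Real.exp (-x ^ 2 / 2)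
      = (2*k+1 : ℝ) * ∫ x : ℝ, x ^ (2*k) * Real.exp (-x ^ 2 / 2) := by
  set F : ℝ → ℝ := fun x => x ^ (2*k+1) * Real.exp (-x ^ 2 / 2) with hF
  set G : ℝ → ℝ := fun x => (2*k+1 : ℝ) * (x ^ (2*k) * Real.exp (-x ^ 2 / 2))
      - x ^ (2*k+2) * Real.exp (-x ^ 2 / 2) with hG
  have hderiv : ∀ x : ℝ, HasDerivAt F (G x) x := by
    intro x
    have h1 : HasDerivAt (fun x : ℝ => x ^ (2*k+1)) ((2*k+1 : ℝ) * x ^ (2*k)) x := by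
      simpa using hasDerivAt_pow (2*k+1) x
    have h2 : HasDerivAt (fun x : ℝ => Real.exp (-x ^ 2 / 2)) (-x * Real.exp (-x ^ 2 / 2)) x := by
      have hq : HasDerivAt (fun x : ℝ => -x ^ 2 / 2) (-x) x := by
        have := ((hasDerivAt_pow 2 x).neg).div_const 2
        exact this.congr_deriv (by simp; ring)
      simpa [mul_comm] using hq.exp
    have := h1.mul h2
    exact this.congr_deriv (by simp only [hG]; ring)
  have hGint : Integrable G := by
    exact ((aux_integrable_pow_gauss (2*k)).const_mul _).sub (aux_integrable_pow_gauss (2*k+2))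
  have htop : Tendsto F atTop (nhds 0) := aux_tendsto_pow_gauss (2*k+1)
  have hbot : Tendsto F atBot (nhds 0) := by
    have h1 : Tendsto (fun x : ℝ => F (-x)) atTop (nhds 0) := by
      have : (fun x : ℝ => F (-x)) = fun x => -F x := by
        funext x
        simp only [hF]
        rw [Odd.neg_pow ⟨k, by ring⟩]
        ring_nf
      rw [this]
      simpa using htop.neg
    have h2 := h1.comp tendsto_neg_atBot_atTop
    convert h2 using 1
    funext x
    simp [Function.comp]
  have hIoi : ∫ x in Ioi (0:ℝ), G x = 0 - F 0 :=
    integral_Ioi_of_hasDerivAt_of_tendsto (hderiv 0).continuousAt.continuousWithinAt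
      (fun x _ => hderiv x) hGint.integrableOn htop
  have hIic : ∫ x in Iic (0:ℝ), G x = F 0 - 0 :=
    integral_Iic_of_hasDerivAt_of_tendsto (hderiv 0).continuousAt.continuousWithinAt
      (fun x _ => hderiv x) hGint.integrableOn hbot
  have hsplit := intervalIntegral.integral_Iic_add_Ioi (b := (0:ℝ)) (f := G) (μ := volume)
      hGint.integrableOn hGint.integrableOn
  have htot : ∫ x : ℝ, G x = 0 := by
    rw [← hsplit, hIoi, hIic]; ring
  have := integral_sub ((aux_integrable_pow_gauss (2*k)).const_mul ((2*k+1 : ℝ)))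
      (aux_integrable_pow_gauss (2*k+2))
  rw [hG] at htot
  rw [this] at htot
  rw [integral_const_mul] at htot
  linarith [htot]

lemma aux_gauss_moment (j : ℕ) :
    ∫ x : ℝ, x ^ (2*j) * Real.exp (-x ^ 2 / 2)
      = Real.sqrt (2*π) * ∏ i ∈ Finset.range j, (1 + 2*(i:ℝ)) := by
  induction j with
  | zero =>
    simp only [mul_zero, pow_zero, one_mul, Finset.range_zero, Finset.prod_empty, mul_one]
    have : ∀ x : ℝ, Real.exp (-x ^ 2 / 2) = Real.exp (-(1/2 : ℝ) * x ^ 2) := by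
      intro x; ring_nf
    rw [funext this, integral_gaussian]
    rw [show π / (1/2:ℝ) = 2 * π by ring]
  | succ k ih =>
    have h1 : 2*(k+1) = 2*k+2 := by ring
    rw [h1, aux_gauss_moment_rec k, ih, Finset.prod_range_succ]
    push_cast
    ring

lemma aux_lint_gauss_moment (j : ℕ) :
    ∫⁻ x, ENNReal.ofReal (x ^ (2*j)) ∂(gaussianReal 0 1)
      = ENNReal.ofReal (∏ i ∈ Finset.range j, (1 + 2*(i:ℝ))) := by
  rw [gaussianReal_of_var_ne_zero 0 one_ne_zero]
  rw [lintegral_withDensity_eq_lintegral_mul _ (measurable_gaussianPDF 0 1)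
    (by exact (measurable_id.pow_const _).ennreal_ofReal)]
  have hpdf : ∀ x : ℝ, gaussianPDF 0 1 x = ENNReal.ofReal ((Real.sqrt (2*π))⁻¹ * Real.exp (-x^2/2)) := by
    intro x
    rw [gaussianPDF]
    congr 1
    rw [gaussianPDFReal]
    push_cast
    norm_num
  have hfun : ∀ x : ℝ, (gaussianPDF 0 1 * fun x => ENNReal.ofReal (x ^ (2*j))) x
      = ENNReal.ofReal ((Real.sqrt (2*π))⁻¹ * (x ^ (2*j) * Real.exp (-x^2/2))) := by
    intro x
    simp only [Pi.mul_apply, hpdf x]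
    rw [← ENNReal.ofReal_mul (by positivity)]
    congr 1
    ring
  rw [funext hfun]
  rw [← MeasureTheory.ofReal_integral_eq_lintegral_ofReal]
  · rw [integral_const_mul, aux_gauss_moment]
    congr 1
    have h : Real.sqrt (2*π) ≠ 0 := by positivity
    field_simp
  · exact (aux_integrable_pow_gauss (2*j)).const_mul _
  · filter_upwards with x
    have hx : (0:ℝ) ≤ x ^ (2*j) := by rw [pow_mul]; positivity
    positivity

lemma aux_vandermonde (a b : ℝ) (q : ℕ) :
    ∑ j ∈ Finset.range (q+1), (q.choose j : ℝ) * (∏ i ∈ Finset.range j, (a + 2*i))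
        * ∏ i ∈ Finset.range (q-j), (b + 2*i)
      = ∏ i ∈ Finset.range q, (a + b + 2*i) := by
  induction q with
  | zero => simp
  | succ q ih =>
    rw [Finset.prod_range_succ, ← ih]
    set f : ℕ → ℝ := fun j => ∏ i ∈ Finset.range j, (a + 2*(i:ℝ)) with hf
    set g : ℕ → ℝ := fun j => ∏ i ∈ Finset.range j, (b + 2*(i:ℝ)) with hg
    have key : ∀ j ∈ Finset.range (q+1),
        ((q+1).choose (j+1) : ℝ) * f (j+1) * g (q+1-(j+1))
          = (q.choose j : ℝ) * ((a + 2*j) * (f j * g (q-j)))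
            + (q.choose (j+1) : ℝ) * f (j+1) * g (q-j) := by
      intro j hj
      have h1 : q+1-(j+1) = q-j := by omega
      rw [h1, Nat.choose_succ_succ]
      have hfj : f (j+1) = f j * (a + 2*j) := Finset.prod_range_succ _ j
      rw [hfj]
      push_cast
      ring
    rw [Finset.sum_range_succ' _ (q+1)]
    have h0 : ((q+1).choose 0 : ℝ) * f 0 * g (q+1-0) = g (q+1) := by simp [hf, hg]
    rw [h0]
    rw [Finset.sum_congr rfl key]
    rw [Finset.sum_add_distrib]
    have hsecond : (∑ j ∈ Finset.range (q+1), (q.choose (j+1) : ℝ) * f (j+1) * g (q-j))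
        + g (q+1)
        = ∑ j ∈ Finset.range (q+1), (q.choose j : ℝ) * f j * g (q+1-j) := by
      rw [Finset.sum_range_succ' (fun j => (q.choose j : ℝ) * f j * g (q+1-j)) q]
      rw [Finset.sum_range_succ
        (fun j => (q.choose (j+1) : ℝ) * f (j+1) * g (q-j)) q]
      have hlast : (q.choose (q+1) : ℝ) * f (q+1) * g (q - q) = 0 := by
        rw [Nat.choose_succ_self]; simp
      rw [hlast]
      have hterms : ∀ j ∈ Finset.range q,
          (q.choose (j+1) : ℝ) * f (j+1) * g (q-j)
            = (q.choose (j+1) : ℝ) * f (j+1) * g (q+1-(j+1)) := by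
        intro j hj
        congr 2
        omega
      rw [Finset.sum_congr rfl hterms]
      simp [hf, hg]
    rw [add_assoc, hsecond]
    have hmerge : ∀ j ∈ Finset.range (q+1),
        (q.choose j : ℝ) * ((a + 2*j) * (f j * g (q-j)))
          + (q.choose j : ℝ) * f j * g (q+1-j)
          = (a + b + 2*q) * ((q.choose j : ℝ) * f j * g (q-j)) := by
      intro j hj
      have hjq : j ≤ q := Nat.lt_succ_iff.mp (Finset.mem_range.mp hj)
      have h1 : q+1-j = (q-j)+1 := by omega
      have h2 : g ((q-j)+1) = g (q-j) * (b + 2*((q-j:ℕ):ℝ)) := Finset.prod_range_succ _ _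
      have h3 : ((q-j : ℕ) : ℝ) = (q:ℝ) - j := by
        rw [Nat.cast_sub hjq]
      rw [h1, h2, h3]
      ring
    rw [← Finset.sum_add_distrib, Finset.sum_congr rfl hmerge, ← Finset.mul_sum]
    ring

lemma aux_measurable_S (d : ℕ) : Measurable (fun w : Fin d → ℝ => ∑ i, (w i) ^ 2) :=
  Finset.measurable_sum _ (fun i _ => (measurable_pi_apply i).pow_const 2)

lemma aux_pi_moment : ∀ (d : ℕ) (q : ℕ),
    ∫⁻ y : Fin d → ℝ, ENNReal.ofReal ((∑ i, (y i) ^ 2) ^ q)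
        ∂(Measure.pi fun _ : Fin d => gaussianReal 0 1)
      = ENNReal.ofReal (∏ i ∈ Finset.range q, ((d:ℝ) + 2*i)) := by
  intro d
  induction d with
  | zero =>
    intro q
    have : ∀ y : Fin 0 → ℝ, (∑ i, (y i)^2) = (0:ℝ) := by intro y; simp
    simp only [this]
    rw [lintegral_const, measure_univ, mul_one]
    cases q with
    | zero => simp
    | succ q' =>
      rw [Finset.prod_eq_zero (Finset.mem_range.mpr (Nat.succ_pos q'))]
      · simp
      · norm_num
  | succ d ih =>
    intro q
    have hMP := (measurePreserving_piFinSuccAbove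
      (fun _ : Fin (d+1) => gaussianReal 0 1) 0).symm
    set e := MeasurableEquiv.piFinSuccAbove (fun _ : Fin (d+1) => ℝ) 0 with he
    have hmeasG : Measurable fun y : Fin (d+1) → ℝ =>
        ENNReal.ofReal ((∑ i, (y i) ^ 2) ^ q) :=
      ((aux_measurable_S (d+1)).pow_const q).ennreal_ofReal
    rw [← hMP.lintegral_comp hmeasG]
    have hm : Measurable fun z : ℝ × (Fin d → ℝ) =>
        ENNReal.ofReal ((∑ i, ((e.symm z) i) ^ 2) ^ q) := hmeasG.comp e.symm.measurable
    have hsum : ∀ z : ℝ × (Fin d → ℝ),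
        (∑ i, ((e.symm z) i) ^ 2) = z.1 ^ 2 + ∑ i, (z.2 i) ^ 2 := by
      intro z
      have hz : e.symm z = Fin.cons z.1 z.2 := by
        rw [he, MeasurableEquiv.piFinSuccAbove_symm_apply]
        funext i
        refine Fin.cases ?_ (fun j => ?_) i
        · simp
        · simp
      rw [hz, Fin.sum_univ_succ]
      simp
    have hinner : ∀ t : ℝ,
        ∫⁻ w : Fin d → ℝ, ENNReal.ofReal ((t ^ 2 + ∑ i, (w i) ^ 2) ^ q)
            ∂(Measure.pi fun _ : Fin d => gaussianReal 0 1)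
          = ∑ j ∈ Finset.range (q+1),
              ENNReal.ofReal ((q.choose j : ℝ) * t ^ (2*j))
                * ENNReal.ofReal (∏ i ∈ Finset.range (q-j), ((d:ℝ) + 2*i)) := by
      intro t
      have hexp : ∀ w : Fin d → ℝ,
          ENNReal.ofReal ((t ^ 2 + ∑ i, (w i) ^ 2) ^ q)
            = ∑ j ∈ Finset.range (q+1),
                ENNReal.ofReal ((q.choose j : ℝ) * t ^ (2*j))
                  * ENNReal.ofReal ((∑ i, (w i) ^ 2) ^ (q-j)) := by
        intro w
        have hS : (0:ℝ) ≤ ∑ i, (w i)^2 := Finset.sum_nonneg (fun i _ => sq_nonneg _)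
        rw [add_pow]
        rw [ENNReal.ofReal_sum_of_nonneg (fun j _ =>
          mul_nonneg (mul_nonneg (by positivity) (pow_nonneg hS _)) (by positivity))]
        apply Finset.sum_congr rfl
        intro j hj
        rw [← ENNReal.ofReal_mul (mul_nonneg (Nat.cast_nonneg _) (by rw [pow_mul]; positivity))]
        congr 1
        rw [← pow_mul]
        ring
      simp only [hexp]
      rw [lintegral_finset_sum]
      · apply Finset.sum_congr rfl
        intro j hj
        rw [lintegral_const_mul _ (((aux_measurable_S d).pow_const (q-j)).ennreal_ofReal)]
        rw [ih (q-j)]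
      · intro j hj
        exact (((aux_measurable_S d).pow_const (q-j)).ennreal_ofReal).const_mul _
    calc ∫⁻ z, ENNReal.ofReal ((∑ i, ((e.symm z) i) ^ 2) ^ q)
            ∂((gaussianReal 0 1).prod (Measure.pi fun _ : Fin d => gaussianReal 0 1))
        = ∫⁻ t, ∫⁻ w, ENNReal.ofReal ((t ^ 2 + ∑ i, (w i) ^ 2) ^ q)
            ∂(Measure.pi fun _ : Fin d => gaussianReal 0 1) ∂(gaussianReal 0 1) := by
          rw [lintegral_prod _ hm.aemeasurable]
          apply lintegral_congr
          intro t
          apply lintegral_congr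
          intro w
          rw [hsum (t, w)]
      _ = ∑ j ∈ Finset.range (q+1),
            (∫⁻ t, ENNReal.ofReal ((q.choose j : ℝ) * t ^ (2*j)) ∂(gaussianReal 0 1))
              * ENNReal.ofReal (∏ i ∈ Finset.range (q-j), ((d:ℝ) + 2*i)) := by
          rw [funext hinner]
          rw [lintegral_finset_sum]
          · apply Finset.sum_congr rfl
            intro j hj
            rw [lintegral_mul_const _ (by
              exact Measurable.ennreal_ofReal <| (measurable_id.pow_const (2*j)).const_mul _)]
          · intro j hj
            exact (Measurable.ennreal_ofReal <|
              (measurable_id.pow_const (2*j)).const_mul _).mul_const _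
      _ = ∑ j ∈ Finset.range (q+1),
            ENNReal.ofReal ((q.choose j : ℝ) * (∏ i ∈ Finset.range j, (1 + 2*(i:ℝ)))
              * ∏ i ∈ Finset.range (q-j), ((d:ℝ) + 2*i)) := by
          apply Finset.sum_congr rfl
          intro j hj
          have : ∀ t : ℝ, ENNReal.ofReal ((q.choose j : ℝ) * t ^ (2*j))
              = ENNReal.ofReal ((q.choose j : ℝ)) * ENNReal.ofReal (t ^ (2*j)) := by
            intro t
            rw [← ENNReal.ofReal_mul (by positivity)]
          rw [funext this, lintegral_const_mul _ (by
            exact Measurable.ennreal_ofReal (measurable_id.pow_const (2*j)))]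
          rw [aux_lint_gauss_moment j]
          rw [← ENNReal.ofReal_mul (by positivity), ← ENNReal.ofReal_mul (by positivity)]
      _ = ENNReal.ofReal (∏ i ∈ Finset.range q, (((d+1:ℕ):ℝ) + 2*i)) := by
          have hnn : ∀ j ∈ Finset.range (q+1),
              0 ≤ (q.choose j : ℝ) * (∏ i ∈ Finset.range j, (1 + 2*(i:ℝ)))
                * ∏ i ∈ Finset.range (q-j), ((d:ℝ) + 2*i) := by
            intro j hj
            exact mul_nonneg (mul_nonneg (Nat.cast_nonneg _)
              (Finset.prod_nonneg fun i _ => by positivity))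
              (Finset.prod_nonneg fun i _ => by positivity)
          rw [← ENNReal.ofReal_sum_of_nonneg hnn, aux_vandermonde 1 (d:ℝ) q]
          congr 1
          apply Finset.prod_congr rfl
          intro i _
          push_cast
          ring

lemma aux_std_moment_even (d q : ℕ) :
    ∫⁻ u, ENNReal.ofReal (‖u‖ ^ (2*q)) ∂(stdGaussian d)
      = ENNReal.ofReal (∏ i ∈ Finset.range q, ((d:ℝ) + 2*i)) := by
  rw [_root_.stdGaussian, lintegral_map ((measurable_norm.pow_const (2*q)).ennreal_ofReal)
    (MeasurableEquiv.toLp 2 (Fin d → ℝ)).measurable]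
  rw [← aux_pi_moment d q]
  apply lintegral_congr
  intro y
  congr 1
  rw [EuclideanSpace.norm_eq]
  have happ : ∀ i, ((MeasurableEquiv.toLp 2 (Fin d → ℝ)) y) i = y i := by
    intro i; rfl
  have hnn : (0:ℝ) ≤ ∑ i, (y i)^2 := Finset.sum_nonneg fun i _ => sq_nonneg _
  calc Real.sqrt (∑ i, ‖((MeasurableEquiv.toLp 2 (Fin d → ℝ)) y) i‖ ^ 2) ^ (2*q)
      = Real.sqrt (∑ i, (y i)^2) ^ (2*q) := by
        congr 2
        apply Finset.sum_congr rfl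
        intro i _
        rw [happ i, Real.norm_eq_abs, sq_abs]
    _ = (∑ i, (y i)^2) ^ q := by
        rw [pow_mul, Real.sq_sqrt hnn]

lemma aux_prod_le (d q k : ℕ) (h2q : 2*q ≤ k + 1) :
    ∏ i ∈ Finset.range q, ((d:ℝ) + 2*i) ≤ ((d:ℝ) + k) ^ q := by
  calc ∏ i ∈ Finset.range q, ((d:ℝ) + 2*i) ≤ ∏ i ∈ Finset.range q, ((d:ℝ) + k) := by
        apply Finset.prod_le_prod
        · intro i _; positivity
        · intro i hi
          have : 2*i ≤ (k:ℝ) := by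
            have hi' : i < q := Finset.mem_range.mp hi
            have : 2*i + 2 ≤ k + 1 := by omega
            have h3 : (2*i:ℕ) ≤ k := by omega
            calc (2:ℝ)*i = ((2*i : ℕ):ℝ) := by push_cast; ring
              _ ≤ (k:ℝ) := Nat.cast_le.mpr h3
          linarith
    _ = ((d:ℝ) + k) ^ q := by rw [Finset.prod_const, Finset.card_range]

lemma aux_std_moment_le (d k : ℕ) (hk : 1 ≤ k) :
    ∫⁻ u, ENNReal.ofReal (‖u‖ ^ k) ∂(stdGaussian d)
      ≤ ENNReal.ofReal (((d:ℝ) + k) ^ ((k:ℝ)/2)) := by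
  have hdk : (0:ℝ) ≤ (d:ℝ) + k := by positivity
  rcases Nat.even_or_odd k with ⟨q, hq⟩ | ⟨q, hq⟩
  · -- k = q + q
    have hkq : k = 2*q := by omega
    subst hkq
    rw [aux_std_moment_even d q]
    have h1 : ((d:ℝ) + ((2*q:ℕ):ℝ)) ^ (((2*q:ℕ):ℝ)/2) = ((d:ℝ) + ((2*q:ℕ):ℝ)) ^ q := by
      rw [show (((2*q:ℕ):ℝ)/2) = (q:ℕ) by push_cast; ring]
      rw [Real.rpow_natCast]
    apply ENNReal.ofReal_le_ofReal
    rw [h1]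
    exact aux_prod_le d q (2*q) (by omega)
  · -- k odd : k = 2*q+1
    have hkq : k = 2*q+1 := by omega
    have hkpos : (0:ℝ) < k := by exact_mod_cast hk
    -- Hölder with exponents (k+1)/k and k+1
    have hconj : (((k:ℝ)+1)/k).HolderConjugate ((k:ℝ)+1) := by
      rw [Real.holderConjugate_iff]
      constructor
      · rw [lt_div_iff₀ hkpos]; linarith
      · rw [inv_div]
        field_simp
    set s : ℝ := ((k:ℝ)+1)/k with hs
    have hspos : 0 < s := by positivity
    have hf : AEMeasurable (fun u : EuclideanSpace ℝ (Fin d) => ENNReal.ofReal (‖u‖^k))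
        (stdGaussian d) := ((measurable_norm.pow_const k).ennreal_ofReal).aemeasurable
    have hH := ENNReal.lintegral_mul_le_Lp_mul_Lq (stdGaussian d) hconj hf
      (aemeasurable_const (b := (1:ℝ≥0∞)))
    simp only [Pi.mul_apply, mul_one, ENNReal.one_rpow, lintegral_const, measure_univ,
      one_mul] at hH
    have hpow : ∀ u : EuclideanSpace ℝ (Fin d),
        (ENNReal.ofReal (‖u‖^k)) ^ s = ENNReal.ofReal (‖u‖ ^ (2*(q+1))) := by
      intro u
      rw [ENNReal.ofReal_rpow_of_nonneg (by positivity) hspos.le]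
      congr 1
      rw [← Real.rpow_natCast ‖u‖ k, ← Real.rpow_mul (norm_nonneg u)]
      have hks : (k:ℝ) * s = ((2*(q+1):ℕ):ℝ) := by
        rw [hs]
        have hne : (k:ℝ) ≠ 0 := ne_of_gt hkpos
        field_simp
        push_cast [hkq]
        ring
      rw [hks, Real.rpow_natCast]
    simp only [hpow] at hH
    rw [aux_std_moment_even d (q+1)] at hH
    have hmono : (ENNReal.ofReal (∏ i ∈ Finset.range (q+1), ((d:ℝ) + 2*i))) ^ (1/s)
        ≤ ENNReal.ofReal (((d:ℝ) + k) ^ ((k:ℝ)/2)) := by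
      have h1 : ENNReal.ofReal (∏ i ∈ Finset.range (q+1), ((d:ℝ) + 2*i))
          ≤ ENNReal.ofReal (((d:ℝ) + k) ^ (q+1)) :=
        ENNReal.ofReal_le_ofReal (aux_prod_le d (q+1) k (by omega))
      calc (ENNReal.ofReal (∏ i ∈ Finset.range (q+1), ((d:ℝ) + 2*i))) ^ (1/s)
          ≤ (ENNReal.ofReal (((d:ℝ) + k) ^ (q+1))) ^ (1/s) :=
            ENNReal.rpow_le_rpow h1 (by positivity)
        _ = ENNReal.ofReal ((((d:ℝ) + k) ^ (q+1)) ^ (1/s)) := by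
            rw [ENNReal.ofReal_rpow_of_nonneg (by positivity) (by positivity)]
        _ = ENNReal.ofReal (((d:ℝ) + k) ^ ((k:ℝ)/2)) := by
            congr 1
            rw [← Real.rpow_natCast ((d:ℝ)+k) (q+1), ← Real.rpow_mul hdk]
            congr 1
            rw [hs, one_div_div]
            push_cast [hkq]
            field_simp
            ring
    calc ∫⁻ u, ENNReal.ofReal (‖u‖ ^ k) ∂(stdGaussian d)
        ≤ (ENNReal.ofReal (∏ i ∈ Finset.range (q+1), ((d:ℝ) + 2*i))) ^ (1/s) := hH
      _ ≤ ENNReal.ofReal (((d:ℝ) + k) ^ ((k:ℝ)/2)) := hmono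

lemma aux_three_pow (p : ℕ) (hp : 1 ≤ p) (a b c : ℝ) (ha : 0 ≤ a) (hb : 0 ≤ b) (hc : 0 ≤ c) :
    (a + b + c) ^ p ≤ 3 ^ (p-1) * (a ^ p + b ^ p + c ^ p) := by
  have key := Real.pow_arith_mean_le_arith_mean_pow (s := (Finset.univ : Finset (Fin 3)))
    (fun _ => (3:ℝ)⁻¹) ![a, b, c] (fun i _ => by norm_num)
    (by rw [Fin.sum_univ_three]; norm_num)
    (fun i _ => by fin_cases i <;> simpa) p
  rw [Fin.sum_univ_three, Fin.sum_univ_three] at key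
  simp only [Matrix.cons_val_zero, Matrix.cons_val_one, Matrix.head_cons,
    Matrix.cons_val_two, Matrix.tail_cons] at key
  obtain ⟨n, rfl⟩ : ∃ n, p = n + 1 := ⟨p - 1, by omega⟩
  have h3 : (a + b + c) = 3 * ((3:ℝ)⁻¹ * a + 3⁻¹ * b + 3⁻¹ * c) := by ring
  rw [h3, mul_pow]
  calc (3:ℝ) ^ (n+1) * ((3:ℝ)⁻¹ * a + 3⁻¹ * b + 3⁻¹ * c) ^ (n+1)
      ≤ 3 ^ (n+1) * ((3:ℝ)⁻¹ * a ^ (n+1) + 3⁻¹ * b ^ (n+1) + 3⁻¹ * c ^ (n+1)) :=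
        mul_le_mul_of_nonneg_left key (by positivity)
    _ = 3 ^ ((n+1)-1) * (a ^ (n+1) + b ^ (n+1) + c ^ (n+1)) := by
        rw [Nat.add_sub_cancel, pow_succ]
        ring

/-- Lemma 4.3. Moment bound for `F(u) = σ⁻¹ (f (x + σu) - f x) u`:
`E[‖F(u)‖^p] ≤ ℋ_(p) (‖x‖^{mp} + 1)`. -/
theorem gs_estimator_moment_bound {d : ℕ} (hd : 1 ≤ d) (f : EuclideanSpace ℝ (Fin d) → ℝ)
    (R1 R2 : ℝ) (m : ℕ) (hR1 : 0 ≤ R1) (hR2 : 0 < R2) (hR1m : R1 = 0 ↔ m = 0)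
    (hf : SPBGrowth f R1 R2 m) (σ : ℝ) (hσ : 0 < σ) (x : EuclideanSpace ℝ (Fin d))
    (p : ℕ) (hp : 1 ≤ p) :
    (∫⁻ u, ENNReal.ofReal (‖(σ⁻¹ * (f (x + σ • u) - f x)) • u‖ ^ p) ∂(stdGaussian d))
      ≤ ENNReal.ofReal (spbH d m p R1 R2 σ * (‖x‖ ^ (m * p) + 1)) := by
  have hA0 : (0:ℝ) ≤ (2 : ℝ) ^ ((m : ℤ) - 1) * R1 :=
    mul_nonneg (zpow_pos (by norm_num : (0:ℝ) < 2) _).le hR1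
  set A : ℝ := (2 : ℝ) ^ ((m : ℤ) - 1) * R1 with hAdef
  set k : ℕ := (m + 2) * p with hkdef
  have hk1 : 1 ≤ k := hkdef ▸ Nat.mul_pos (by omega) hp
  have h2p1 : 1 ≤ 2 * p := by omega
  have hX0 : (0:ℝ) ≤ ‖x‖ ^ (m*p) := by positivity
  have hAp0 : (0:ℝ) ≤ A ^ p := pow_nonneg hA0 p
  have hσm : (0:ℝ) ≤ σ ^ (m*p) := pow_nonneg hσ.le _
  -- pointwise bound
  have hpt : ∀ u : EuclideanSpace ℝ (Fin d),
      ‖(σ⁻¹ * (f (x + σ • u) - f x)) • u‖ ^ p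
        ≤ (3 ^ (p-1) * (A ^ p * ‖x‖ ^ (m*p) + R2 ^ p)) * ‖u‖ ^ (2*p)
          + (3 ^ (p-1) * (A ^ p * σ ^ (m*p))) * ‖u‖ ^ k := by
    intro u
    have hnorm : ‖(σ⁻¹ * (f (x + σ • u) - f x)) • u‖
        = σ⁻¹ * |f (x + σ • u) - f x| * ‖u‖ := by
      rw [norm_smul, Real.norm_eq_abs, abs_mul, abs_of_pos (inv_pos.mpr hσ)]
    have hΔ : |f (x + σ • u) - f x| ≤ (A * ‖x‖ ^ m + A * (σ ^ m * ‖u‖ ^ m) + R2) * (σ * ‖u‖) := by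
      have h := hf x (x + σ • u)
      rw [abs_sub_comm] at h
      have e1 : (x + σ • u) - x = σ • u := add_sub_cancel_left x (σ • u)
      have e2 : x - (x + σ • u) = -(σ • u) := by abel
      rw [e1, e2, norm_neg, norm_smul, Real.norm_eq_abs, abs_of_pos hσ] at h
      calc |f (x + σ • u) - f x| ≤ (A * ‖x‖ ^ m + A * (σ * ‖u‖) ^ m + R2) * (σ * ‖u‖) := h
        _ = (A * ‖x‖ ^ m + A * (σ ^ m * ‖u‖ ^ m) + R2) * (σ * ‖u‖) := by rw [mul_pow]
    have hFle : ‖(σ⁻¹ * (f (x + σ • u) - f x)) • u‖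
        ≤ (A * ‖x‖ ^ m + A * (σ ^ m * ‖u‖ ^ m) + R2) * ‖u‖ ^ 2 := by
      rw [hnorm]
      have hstep := mul_le_mul_of_nonneg_right
        (mul_le_mul_of_nonneg_left hΔ (inv_pos.mpr hσ).le) (norm_nonneg u)
      calc σ⁻¹ * |f (x + σ • u) - f x| * ‖u‖
          ≤ σ⁻¹ * ((A * ‖x‖ ^ m + A * (σ ^ m * ‖u‖ ^ m) + R2) * (σ * ‖u‖)) * ‖u‖ := hstep
        _ = (A * ‖x‖ ^ m + A * (σ ^ m * ‖u‖ ^ m) + R2) * ‖u‖ ^ 2 := by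
            field_simp
    have hsum0 : (0:ℝ) ≤ A * ‖x‖ ^ m + A * (σ ^ m * ‖u‖ ^ m) + R2 := by positivity
    have hpow := pow_le_pow_left₀ (norm_nonneg _) hFle p
    have hsplit : ((A * ‖x‖ ^ m + A * (σ ^ m * ‖u‖ ^ m) + R2) * ‖u‖ ^ 2) ^ p
        ≤ (3 ^ (p-1) * (A ^ p * ‖x‖ ^ (m*p) + R2 ^ p)) * ‖u‖ ^ (2*p)
          + (3 ^ (p-1) * (A ^ p * σ ^ (m*p))) * ‖u‖ ^ k := by
      have hre : (A * ‖x‖ ^ m + A * (σ ^ m * ‖u‖ ^ m) + R2) * ‖u‖ ^ 2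
          = (A * ‖x‖ ^ m * ‖u‖ ^ 2) + (A * σ ^ m * ‖u‖ ^ (m+2)) + (R2 * ‖u‖ ^ 2) := by
        rw [pow_add]
        ring
      rw [hre]
      have h3 := aux_three_pow p hp (A * ‖x‖ ^ m * ‖u‖ ^ 2) (A * σ ^ m * ‖u‖ ^ (m+2))
        (R2 * ‖u‖ ^ 2) (by positivity) (mul_nonneg (mul_nonneg hA0 (pow_nonneg hσ.le m)) (by positivity))
        (by positivity)
      calc ((A * ‖x‖ ^ m * ‖u‖ ^ 2) + (A * σ ^ m * ‖u‖ ^ (m+2)) + (R2 * ‖u‖ ^ 2)) ^ p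
          ≤ 3 ^ (p-1) * ((A * ‖x‖ ^ m * ‖u‖ ^ 2) ^ p + (A * σ ^ m * ‖u‖ ^ (m+2)) ^ p
              + (R2 * ‖u‖ ^ 2) ^ p) := h3
        _ = (3 ^ (p-1) * (A ^ p * ‖x‖ ^ (m*p) + R2 ^ p)) * ‖u‖ ^ (2*p)
              + (3 ^ (p-1) * (A ^ p * σ ^ (m*p))) * ‖u‖ ^ k := by
            have e1 : (A * ‖x‖ ^ m * ‖u‖ ^ 2) ^ p = A ^ p * ‖x‖ ^ (m*p) * ‖u‖ ^ (2*p) := by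
              rw [mul_pow, mul_pow, ← pow_mul, ← pow_mul]
            have e2 : (A * σ ^ m * ‖u‖ ^ (m+2)) ^ p = A ^ p * σ ^ (m*p) * ‖u‖ ^ k := by
              rw [mul_pow, mul_pow, ← pow_mul, ← pow_mul, ← hkdef]
            have e3 : (R2 * ‖u‖ ^ 2) ^ p = R2 ^ p * ‖u‖ ^ (2*p) := by
              rw [mul_pow, ← pow_mul]
            rw [e1, e2, e3]
            ring
    exact le_trans hpow hsplit
  -- constants
  have hc1 : (0:ℝ) ≤ 3 ^ (p-1) * (A ^ p * ‖x‖ ^ (m*p) + R2 ^ p) := by positivity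
  have hc2 : (0:ℝ) ≤ 3 ^ (p-1) * (A ^ p * σ ^ (m*p)) :=
    mul_nonneg (by positivity) (mul_nonneg hAp0 hσm)
  set c1 : ℝ := 3 ^ (p-1) * (A ^ p * ‖x‖ ^ (m*p) + R2 ^ p) with hc1def
  set c2 : ℝ := 3 ^ (p-1) * (A ^ p * σ ^ (m*p)) with hc2def
  have hmeas1 : Measurable fun u : EuclideanSpace ℝ (Fin d) =>
      ENNReal.ofReal (‖u‖ ^ (2*p)) := (measurable_norm.pow_const _).ennreal_ofReal
  have hmeas2 : Measurable fun u : EuclideanSpace ℝ (Fin d) =>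
      ENNReal.ofReal (‖u‖ ^ k) := (measurable_norm.pow_const _).ennreal_ofReal
  have hQ0 : (0:ℝ) ≤ ((d:ℝ) + k) ^ ((k:ℝ)/2) := Real.rpow_nonneg (by positivity) _
  have hP0 : (0:ℝ) ≤ ((d:ℝ) + (2*p:ℕ)) ^ (((2*p:ℕ):ℝ)/2) := Real.rpow_nonneg (by positivity) _
  calc ∫⁻ u, ENNReal.ofReal (‖(σ⁻¹ * (f (x + σ • u) - f x)) • u‖ ^ p) ∂(stdGaussian d)
      ≤ ∫⁻ u, (ENNReal.ofReal c1 * ENNReal.ofReal (‖u‖ ^ (2*p))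
          + ENNReal.ofReal c2 * ENNReal.ofReal (‖u‖ ^ k)) ∂(stdGaussian d) := by
        apply lintegral_mono
        intro u
        calc ENNReal.ofReal (‖(σ⁻¹ * (f (x + σ • u) - f x)) • u‖ ^ p)
            ≤ ENNReal.ofReal (c1 * ‖u‖ ^ (2*p) + c2 * ‖u‖ ^ k) :=
              ENNReal.ofReal_le_ofReal (hpt u)
          _ = ENNReal.ofReal c1 * ENNReal.ofReal (‖u‖ ^ (2*p))
              + ENNReal.ofReal c2 * ENNReal.ofReal (‖u‖ ^ k) := by
              rw [ENNReal.ofReal_add (mul_nonneg hc1 (by positivity))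
                (mul_nonneg hc2 (by positivity)), ENNReal.ofReal_mul hc1,
                ENNReal.ofReal_mul hc2]
    _ = ENNReal.ofReal c1 * (∫⁻ u, ENNReal.ofReal (‖u‖ ^ (2*p)) ∂(stdGaussian d))
        + ENNReal.ofReal c2 * (∫⁻ u, ENNReal.ofReal (‖u‖ ^ k) ∂(stdGaussian d)) := by
        rw [lintegral_add_left (hmeas1.const_mul _), lintegral_const_mul _ hmeas1,
          lintegral_const_mul _ hmeas2]
    _ ≤ ENNReal.ofReal c1 * ENNReal.ofReal (((d:ℝ) + (2*p:ℕ)) ^ (((2*p:ℕ):ℝ)/2))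
        + ENNReal.ofReal c2 * ENNReal.ofReal (((d:ℝ) + k) ^ ((k:ℝ)/2)) :=
        add_le_add (mul_le_mul_right (aux_std_moment_le d (2*p) h2p1) _)
          (mul_le_mul_right (aux_std_moment_le d k hk1) _)
    _ = ENNReal.ofReal (c1 * (((d:ℝ) + (2*p:ℕ)) ^ (((2*p:ℕ):ℝ)/2))
        + c2 * (((d:ℝ) + k) ^ ((k:ℝ)/2))) := by
        rw [ENNReal.ofReal_add (mul_nonneg hc1 hP0) (mul_nonneg hc2 hQ0),
          ENNReal.ofReal_mul hc1, ENNReal.ofReal_mul hc2]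
    _ ≤ ENNReal.ofReal (spbH d m p R1 R2 σ * (‖x‖ ^ (m * p) + 1)) := by
        apply ENNReal.ofReal_le_ofReal
        -- final real arithmetic
        have hPP : ((d:ℝ) + (2*p:ℕ)) ^ (((2*p:ℕ):ℝ)/2) = ((2 * p + d : ℕ) : ℝ) ^ p := by
          rw [show ((d:ℝ) + ((2*p:ℕ):ℝ)) = ((2 * p + d : ℕ) : ℝ) by push_cast; ring,
            show ((((2*p:ℕ)):ℝ)/2) = ((p:ℕ):ℝ) by push_cast; ring, Real.rpow_natCast]
        have hQQ : ((d:ℝ) + k) ^ ((k:ℝ)/2)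
            = (((m + 2) * p + d : ℕ) : ℝ) ^ ((((m + 2) * p : ℕ) : ℝ) / 2) := by
          rw [show ((d:ℝ) + (k:ℝ)) = (((m + 2) * p + d : ℕ) : ℝ) by
            rw [hkdef]; push_cast; ring]
        rw [hPP, hQQ]
        set PP : ℝ := ((2 * p + d : ℕ) : ℝ) ^ p with hPPdef
        set QQ : ℝ := (((m + 2) * p + d : ℕ) : ℝ) ^ ((((m + 2) * p : ℕ) : ℝ) / 2) with hQQdef
        have hPP0 : 0 ≤ PP := by positivity
        have hQQ0 : 0 ≤ QQ := Real.rpow_nonneg (by positivity) _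
        have hApow : A ^ p = (2 : ℝ) ^ (((m : ℤ) - 1) * p) * R1 ^ p := by
          rw [hAdef, mul_pow]
          congr 1
          rw [← zpow_natCast ((2:ℝ) ^ ((m : ℤ) - 1)) p, ← zpow_mul]
        set T1 : ℝ := (2 : ℝ) ^ (((m : ℤ) - 1) * p) * R1 ^ p * PP with hT1
        set T2 : ℝ := R2 ^ p * PP + (2 : ℝ) ^ (((m : ℤ) - 1) * p) * R1 ^ p * σ ^ (m * p) * QQ
          with hT2
        have h1 : A ^ p * PP ≤ max T1 T2 := by
          rw [hApow]
          exact le_max_left _ _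
        have h2 : R2 ^ p * PP + A ^ p * σ ^ (m*p) * QQ ≤ max T1 T2 := by
          rw [hApow]
          exact le_max_right _ _
        have hspb : spbH d m p R1 R2 σ = 3 ^ (p-1) * max T1 T2 := by
          rw [spbH, hT1, hT2, hPPdef, hQQdef]
        rw [hspb]
        have h30 : (0:ℝ) ≤ 3 ^ (p-1) := by positivity
        calc c1 * PP + c2 * QQ
            = 3 ^ (p-1) * ((A ^ p * PP) * ‖x‖ ^ (m*p) + (R2 ^ p * PP + A ^ p * σ ^ (m*p) * QQ)) := by
              rw [hc1def, hc2def]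
              ring
          _ ≤ 3 ^ (p-1) * ((max T1 T2) * ‖x‖ ^ (m*p) + max T1 T2) :=
              mul_le_mul_of_nonneg_left
                (add_le_add (mul_le_mul_of_nonneg_right h1 hX0) h2) h30
          _ = 3 ^ (p-1) * max T1 T2 * (‖x‖ ^ (m * p) + 1) := by ring
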